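/- In the hypergraph H₁* on ℕ₊ with edges {E finite : |E| = min E}, every matching is finite-or-infinite, and for any infinite matching M there exist three pairwise disjoint edges F₁, F₂, F₃ all contained in the union of just two edges E₁, E₂ of M. Concretely: if E₁ = {v₁ < v₂ < … < v_t} is an edge and E₂ is an edge with min E₂ ≥ v₂ + v₃, and E₁ ∩ E₂ = ∅, then there exist pairwise disjoint sets F₁, F₂, F₃ ⊆ E₁ ∪ E₂ with |F_i| = min F_i = v_i for i = 1, 2, 3. -/
import Mathlib


/-- An edge of the hypergraph `H₁*`: a finite nonempty set `E` of positive
integers with `|E| = min E`. -/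
def IsEdgeH1 (E : Finset ℕ) : Prop := ∃ h : E.Nonempty, E.card = E.min' h

/-- If `E₁` is an edge of `H₁*` with three smallest elements `v₁ < v₂ < v₃`, and `E₂`
is an edge disjoint from `E₁` with `min E₂ ≥ v₂ + v₃`, then there are three pairwise
disjoint sets `F₁, F₂, F₃ ⊆ E₁ ∪ E₂` with `|Fᵢ| = min Fᵢ = vᵢ`. -/
theorem stmt_1 (E₁ E₂ : Finset ℕ) (v₁ v₂ v₃ : ℕ)
    (hE₁ : IsEdgeH1 E₁) (hE₂ : IsEdgeH1 E₂)
    (hv₁ : v₁ ∈ E₁) (hv₁min : ∀ w ∈ E₁, v₁ ≤ w)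
    (hv₂ : v₂ ∈ E₁) (h12 : v₁ < v₂) (hv₂min : ∀ w ∈ E₁, v₁ < w → v₂ ≤ w)
    (hv₃ : v₃ ∈ E₁) (h23 : v₂ < v₃) (hv₃min : ∀ w ∈ E₁, v₂ < w → v₃ ≤ w)
    (hE₂big : ∀ w ∈ E₂, v₂ + v₃ ≤ w)
    (hdisj : Disjoint E₁ E₂) :
    ∃ F₁ F₂ F₃ : Finset ℕ,
      F₁ ⊆ E₁ ∪ E₂ ∧ F₂ ⊆ E₁ ∪ E₂ ∧ F₃ ⊆ E₁ ∪ E₂ ∧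
      Disjoint F₁ F₂ ∧ Disjoint F₁ F₃ ∧ Disjoint F₂ F₃ ∧
      (∃ h₁ : F₁.Nonempty, F₁.card = v₁ ∧ F₁.min' h₁ = v₁) ∧
      (∃ h₂ : F₂.Nonempty, F₂.card = v₂ ∧ F₂.min' h₂ = v₂) ∧
      (∃ h₃ : F₃.Nonempty, F₃.card = v₃ ∧ F₃.min' h₃ = v₃) := by
  obtain ⟨hne₁, hcard₁⟩ := hE₁
  obtain ⟨hne₂, hcard₂⟩ := hE₂
  have hmin₁ : E₁.min' hne₁ = v₁ :=
    le_antisymm (Finset.min'_le _ _ hv₁) (Finset.le_min' _ _ _ hv₁min)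
  have hc1 : E₁.card = v₁ := by rw [hcard₁, hmin₁]
  have hc2 : v₂ + v₃ ≤ E₂.card := by
    rw [hcard₂]; exact hE₂big _ (Finset.min'_mem _ _)
  have h3 : 3 ≤ v₁ := by
    have hsub : ({v₁, v₂, v₃} : Finset ℕ) ⊆ E₁ := by
      intro x hx; simp only [Finset.mem_insert, Finset.mem_singleton] at hx
      rcases hx with h | h | h <;> subst h <;> assumption
    have hle := Finset.card_le_card hsub
    rw [hc1] at hle
    have hcard : ({v₁, v₂, v₃} : Finset ℕ).card = 3 := by
      rw [Finset.card_insert_of_notMem (by simp; omega),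
        Finset.card_insert_of_notMem (by simp; omega), Finset.card_singleton]
    omega
  obtain ⟨C, hC, hCcard⟩ := Finset.exists_subset_card_eq (s := E₂) (n := v₃ - 1) (by omega)
  obtain ⟨B, hB, hBcard⟩ := Finset.exists_subset_card_eq (s := E₂ \ C) (n := v₂ - 1) (by
    rw [Finset.card_sdiff_of_subset hC]; omega)
  obtain ⟨A, hA, hAcard⟩ := Finset.exists_subset_card_eq (s := (E₂ \ C) \ B) (n := 2) (by
    rw [Finset.card_sdiff_of_subset hB, Finset.card_sdiff_of_subset hC]; omega)
  have hAE₂ : A ⊆ E₂ := hA.trans ((Finset.sdiff_subset).trans Finset.sdiff_subset)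
  have hBE₂ : B ⊆ E₂ := hB.trans Finset.sdiff_subset
  have hAB : Disjoint A B := Finset.disjoint_left.mpr fun x hx hx' =>
    (Finset.mem_sdiff.mp (hA hx)).2 hx'
  have hAC : Disjoint A C := Finset.disjoint_left.mpr fun x hx hx' =>
    (Finset.mem_sdiff.mp (Finset.sdiff_subset (hA hx))).2 hx'
  have hBC : Disjoint B C := Finset.disjoint_left.mpr fun x hx hx' =>
    (Finset.mem_sdiff.mp (hB hx)).2 hx'
  have hE₁E₂ : ∀ x, x ∈ E₁ → x ∉ E₂ := fun x hx => Finset.disjoint_left.mp hdisj hx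
  refine ⟨(E₁ \ {v₂, v₃}) ∪ A, insert v₂ B, insert v₃ C, ?_, ?_, ?_, ?_, ?_, ?_, ?_, ?_, ?_⟩
  · exact Finset.union_subset ((Finset.sdiff_subset).trans Finset.subset_union_left)
      (hAE₂.trans Finset.subset_union_right)
  · exact Finset.insert_subset (Finset.mem_union_left _ hv₂)
      (hBE₂.trans Finset.subset_union_right)
  · exact Finset.insert_subset (Finset.mem_union_left _ hv₃)
      (hC.trans Finset.subset_union_right)
  · -- Disjoint F₁ F₂
    rw [Finset.disjoint_left]
    intro x hx hx'
    rcases Finset.mem_union.mp hx with h | h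
    · rcases Finset.mem_insert.mp hx' with rfl | hxB
      · exact (Finset.mem_sdiff.mp h).2 (by simp)
      · exact hE₁E₂ x (Finset.mem_sdiff.mp h).1 (hBE₂ hxB)
    · rcases Finset.mem_insert.mp hx' with rfl | hxB
      · exact hE₁E₂ x hv₂ (hAE₂ h)
      · exact Finset.disjoint_left.mp hAB h hxB
  · -- Disjoint F₁ F₃
    rw [Finset.disjoint_left]
    intro x hx hx'
    rcases Finset.mem_union.mp hx with h | h
    · rcases Finset.mem_insert.mp hx' with rfl | hxC
      · exact (Finset.mem_sdiff.mp h).2 (by simp)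
      · exact hE₁E₂ x (Finset.mem_sdiff.mp h).1 (hC hxC)
    · rcases Finset.mem_insert.mp hx' with rfl | hxC
      · exact hE₁E₂ x hv₃ (hAE₂ h)
      · exact Finset.disjoint_left.mp hAC h hxC
  · -- Disjoint F₂ F₃
    rw [Finset.disjoint_left]
    intro x hx hx'
    rcases Finset.mem_insert.mp hx with rfl | hxB
    · rcases Finset.mem_insert.mp hx' with h | hxC
      · omega
      · exact hE₁E₂ x hv₂ (hC hxC)
    · rcases Finset.mem_insert.mp hx' with rfl | hxC
      · exact hE₁E₂ x hv₃ (hBE₂ hxB)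
      · exact Finset.disjoint_left.mp hBC hxB hxC
  · -- F₁
    have hv₁mem : v₁ ∈ (E₁ \ {v₂, v₃}) ∪ A :=
      Finset.mem_union_left _ (Finset.mem_sdiff.mpr ⟨hv₁, by simp; omega⟩)
    have hsub23 : ({v₂, v₃} : Finset ℕ) ⊆ E₁ := by
      intro x hx; simp only [Finset.mem_insert, Finset.mem_singleton] at hx
      rcases hx with h | h <;> subst h <;> assumption
    have hcard23 : ({v₂, v₃} : Finset ℕ).card = 2 := by
      rw [Finset.card_insert_of_notMem (by simp; omega), Finset.card_singleton]
    have hdAE : Disjoint (E₁ \ {v₂, v₃}) A := Finset.disjoint_left.mpr fun x hx hx' =>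
      hE₁E₂ x (Finset.mem_sdiff.mp hx).1 (hAE₂ hx')
    refine ⟨⟨v₁, hv₁mem⟩, ?_, ?_⟩
    · rw [Finset.card_union_of_disjoint hdAE, Finset.card_sdiff_of_subset hsub23, hc1, hcard23, hAcard]
      omega
    · refine le_antisymm (Finset.min'_le _ _ hv₁mem) (Finset.le_min' _ _ _ ?_)
      intro w hw
      rcases Finset.mem_union.mp hw with h | h
      · exact hv₁min w (Finset.mem_sdiff.mp h).1
      · have := hE₂big w (hAE₂ h); omega
  · -- F₂
    have hv₂B : v₂ ∉ B := fun h => hE₁E₂ v₂ hv₂ (hBE₂ h)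
    refine ⟨⟨v₂, Finset.mem_insert_self _ _⟩, ?_, ?_⟩
    · rw [Finset.card_insert_of_notMem hv₂B, hBcard]; omega
    · refine le_antisymm (Finset.min'_le _ _ (Finset.mem_insert_self _ _))
        (Finset.le_min' _ _ _ ?_)
      intro w hw
      rcases Finset.mem_insert.mp hw with rfl | h
      · exact le_refl _
      · have := hE₂big w (hBE₂ h); omega
  · -- F₃
    have hv₃C : v₃ ∉ C := fun h => hE₁E₂ v₃ hv₃ (hC h)
    refine ⟨⟨v₃, Finset.mem_insert_self _ _⟩, ?_, ?_⟩
    · rw [Finset.card_insert_of_notMem hv₃C, hCcard]; omega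
    · refine le_antisymm (Finset.min'_le _ _ (Finset.mem_insert_self _ _))
        (Finset.le_min' _ _ _ ?_)
      intro w hw
      rcases Finset.mem_insert.mp hw with rfl | h
      · exact le_refl _
      · have := hE₂big w (hC h); omega
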